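/- The limit as R → ∞ of the integral ∫₀^π cos(R·cos θ)·sinh(R·sin θ) dθ equals π. -/

import Mathlib

open Real Filter MeasureTheory Set intervalIntegral

noncomputable def myF (R : ℝ) : ℝ :=
  ∫ θ in (0:ℝ)..π, Real.cos (R * Real.cos θ) * Real.sinh (R * Real.sin θ)

noncomputable def myF' (R θ : ℝ) : ℝ :=
  -Real.cos θ * Real.sin (R * Real.cos θ) * Real.sinh (R * Real.sin θ)
    + Real.sin θ * Real.cos (R * Real.cos θ) * Real.cosh (R * Real.sin θ)

noncomputable def myD (R : ℝ) : ℝ := if R = 0 then 2 else 2 * Real.sin R / R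

-- A: pointwise derivative in R
lemma lemA (θ R : ℝ) :
    HasDerivAt (fun r => Real.cos (r * Real.cos θ) * Real.sinh (r * Real.sin θ))
      (myF' R θ) R := by
  have h1 : HasDerivAt (fun r : ℝ => Real.cos (r * Real.cos θ))
      (-Real.sin (R * Real.cos θ) * (1 * Real.cos θ)) R :=
    ((hasDerivAt_id R).mul_const (Real.cos θ)).cos
  have h2 : HasDerivAt (fun r : ℝ => Real.sinh (r * Real.sin θ))
      (Real.cosh (R * Real.sin θ) * (1 * Real.sin θ)) R :=
    ((hasDerivAt_id R).mul_const (Real.sin θ)).sinh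
  have := h1.mul h2
  exact this.congr_deriv (by unfold myF'; ring)

-- B: antiderivative in θ of R * myF'
lemma lemB (R θ : ℝ) :
    HasDerivAt (fun t => -(Real.sin (R * Real.cos t) * Real.cosh (R * Real.sin t)))
      (R * myF' R θ) θ := by
  have hc : HasDerivAt (fun t : ℝ => R * Real.cos t) (R * -Real.sin θ) θ :=
    (Real.hasDerivAt_cos θ).const_mul R
  have hs : HasDerivAt (fun t : ℝ => R * Real.sin t) (R * Real.cos θ) θ :=
    (Real.hasDerivAt_sin θ).const_mul R
  have h1 : HasDerivAt (fun t : ℝ => Real.sin (R * Real.cos t))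
      (Real.cos (R * Real.cos θ) * (R * -Real.sin θ)) θ := hc.sin
  have h2 : HasDerivAt (fun t : ℝ => Real.cosh (R * Real.sin t))
      (Real.sinh (R * Real.sin θ) * (R * Real.cos θ)) θ := hs.cosh
  have := (h1.mul h2).neg
  exact this.congr_deriv (by unfold myF'; ring)

-- C: the θ-integral of myF'
lemma lemC (R : ℝ) : (∫ θ in (0:ℝ)..π, myF' R θ) = myD R := by
  rcases eq_or_ne R 0 with rfl | hR
  · norm_num [myF', myD]
  · have key : (∫ θ in (0:ℝ)..π, R * myF' R θ) = 2 * Real.sin R := by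
      rw [intervalIntegral.integral_eq_sub_of_hasDerivAt (fun θ _ => lemB R θ)]
      · simp [Real.sin_neg]
        ring
      · apply Continuous.intervalIntegrable
        unfold myF'
        continuity
    rw [intervalIntegral.integral_const_mul] at key
    unfold myD
    rw [if_neg hR]
    field_simp at key ⊢
    linarith

-- D: derivative of myF
lemma lemD (R : ℝ) : HasDerivAt myF (myD R) R := by
  have main := intervalIntegral.hasDerivAt_integral_of_dominated_loc_of_deriv_le
    (F := fun r θ => Real.cos (r * Real.cos θ) * Real.sinh (r * Real.sin θ))
    (F' := fun r θ => myF' r θ) (x₀ := R)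
    (bound := fun _ => 2 * Real.cosh (|R| + 1))
    (μ := volume) (a := 0) (b := π) (s := Metric.ball R 1) (Metric.ball_mem_nhds R one_pos)
    ?_ ?_ ?_ ?_ ?_ ?_
  · have := main.2
    rwa [lemC R] at this
  · filter_upwards with x
    apply Continuous.aestronglyMeasurable
    continuity
  · apply Continuous.intervalIntegrable
    continuity
  · apply Continuous.aestronglyMeasurable
    unfold myF'
    continuity
  · filter_upwards with θ _ x hx
    have hxb : |x| ≤ |R| + 1 := by
      have := mem_ball_iff_norm.mp hx
      have h2 : |x - R| < 1 := this
      calc |x| = |R + (x - R)| := by ring_nf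
        _ ≤ |R| + |x - R| := abs_add_le _ _
        _ ≤ |R| + 1 := by linarith
    have hb1 : |x * Real.sin θ| ≤ |R| + 1 := by
      rw [abs_mul]
      calc |x| * |Real.sin θ| ≤ (|R| + 1) * 1 :=
        mul_le_mul hxb (Real.abs_sin_le_one θ) (abs_nonneg _) (by positivity)
      _ = |R| + 1 := mul_one _
    have hsinh : |Real.sinh (x * Real.sin θ)| ≤ Real.cosh (|R| + 1) := by
      rw [Real.abs_sinh]
      calc Real.sinh |x * Real.sin θ| ≤ Real.sinh (|R| + 1) := Real.sinh_le_sinh.mpr hb1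
        _ ≤ Real.cosh (|R| + 1) := by
          have := Real.sinh_lt_cosh (|R| + 1)
          linarith
    have hcosh : Real.cosh (x * Real.sin θ) ≤ Real.cosh (|R| + 1) := by
      rw [← Real.cosh_abs]
      exact Real.cosh_le_cosh.mpr (by rwa [abs_abs, abs_of_nonneg (by positivity : (0:ℝ) ≤ |R| + 1)])
    have h1 : |(-Real.cos θ) * Real.sin (x * Real.cos θ) * Real.sinh (x * Real.sin θ)|
        ≤ Real.cosh (|R| + 1) := by
      rw [abs_mul, abs_mul]
      calc |(-Real.cos θ)| * |Real.sin (x * Real.cos θ)| * |Real.sinh (x * Real.sin θ)|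
          ≤ 1 * 1 * Real.cosh (|R| + 1) := by
            apply mul_le_mul _ hsinh (abs_nonneg _) (by norm_num)
            apply mul_le_mul _ (Real.abs_sin_le_one _) (abs_nonneg _) (by norm_num)
            rw [abs_neg]; exact Real.abs_cos_le_one θ
        _ = Real.cosh (|R| + 1) := by ring
    have h2 : |Real.sin θ * Real.cos (x * Real.cos θ) * Real.cosh (x * Real.sin θ)|
        ≤ Real.cosh (|R| + 1) := by
      rw [abs_mul, abs_mul, abs_of_pos (Real.cosh_pos _)]
      calc |Real.sin θ| * |Real.cos (x * Real.cos θ)| * Real.cosh (x * Real.sin θ)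
          ≤ 1 * 1 * Real.cosh (|R| + 1) := by
            apply mul_le_mul _ hcosh (Real.cosh_pos _).le (by norm_num)
            apply mul_le_mul (Real.abs_sin_le_one _) (Real.abs_cos_le_one _)
              (abs_nonneg _) (by norm_num)
        _ = Real.cosh (|R| + 1) := by ring
    show ‖myF' x θ‖ ≤ 2 * Real.cosh (|R| + 1)
    unfold myF'
    calc ‖-Real.cos θ * Real.sin (x * Real.cos θ) * Real.sinh (x * Real.sin θ)
          + Real.sin θ * Real.cos (x * Real.cos θ) * Real.cosh (x * Real.sin θ)‖
        ≤ _ + _ := norm_add_le _ _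
      _ ≤ Real.cosh (|R| + 1) + Real.cosh (|R| + 1) := add_le_add h1 h2
      _ = 2 * Real.cosh (|R| + 1) := by ring
  · apply Continuous.intervalIntegrable
    continuity
  · filter_upwards with θ _ x _
    exact lemA θ x

-- E: continuity of myD
lemma lemE : Continuous myD := by
  rw [continuous_iff_continuousAt]
  intro x
  rcases eq_or_ne x 0 with rfl | hx
  · have hslope : Tendsto (slope Real.sin 0) (nhdsWithin 0 {(0:ℝ)}ᶜ) (nhds 1) := by
      have := Real.hasDerivAt_sin 0
      rw [Real.cos_zero] at this
      exact hasDerivAt_iff_tendsto_slope.mp this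
    have h2 : Tendsto (fun t => 2 * slope Real.sin 0 t) (nhdsWithin 0 {(0:ℝ)}ᶜ)
        (nhds 2) := by
      have := hslope.const_mul (2:ℝ)
      simpa using this
    have heq : ∀ t : ℝ, t ≠ 0 → myD t = 2 * slope Real.sin 0 t := by
      intro t ht
      rw [slope_def_field]
      simp only [myD, if_neg ht, Real.sin_zero, sub_zero]
      ring
    have h3 : Tendsto myD (nhdsWithin 0 {(0:ℝ)}ᶜ) (nhds 2) := by
      apply h2.congr'
      filter_upwards [self_mem_nhdsWithin] with t ht
      exact (heq t ht).symm
    have : ContinuousAt myD 0 := by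
      unfold ContinuousAt
      have hD0 : myD 0 = 2 := by simp [myD]
      rw [hD0]
      rw [← nhdsNE_sup_pure 0]
      rw [tendsto_sup]
      refine ⟨h3, ?_⟩
      have := tendsto_pure_nhds myD 0
      rwa [hD0] at this
    exact this
  · have : ∀ᶠ t in nhds x, myD t = 2 * Real.sin t / t := by
      filter_upwards [isOpen_compl_singleton.mem_nhds hx] with t ht
      exact if_neg ht
    have hca : ContinuousAt (fun t : ℝ => 2 * Real.sin t / t) x :=
      (continuous_const.mul Real.continuous_sin).continuousAt.div continuousAt_id hx
    exact hca.congr (Filter.EventuallyEq.symm this)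

-- F: fundamental identity
lemma lemF (R : ℝ) : myF R = ∫ t in (0:ℝ)..R, myD t := by
  have h0 : myF 0 = 0 := by simp [myF]
  rw [intervalIntegral.integral_eq_sub_of_hasDerivAt (fun t _ => lemD t)
    (lemE.intervalIntegrable _ _), h0, sub_zero]

-- exp integral
lemma hexp {t : ℝ} (ht : 0 < t) : (∫ s in Ioi (0:ℝ), Real.exp (-(s * t))) = 1 / t := by
  have := MeasureTheory.integral_comp_mul_left_Ioi (fun u => Real.exp (-u)) 0 ht
  rw [mul_zero] at this
  simp only [smul_eq_mul] at this
  calc (∫ s in Ioi (0:ℝ), Real.exp (-(s * t)))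
      = ∫ s in Ioi (0:ℝ), Real.exp (-(t * s)) := by
        congr 1; ext s; rw [mul_comm]
    _ = t⁻¹ * ∫ u in Ioi (0:ℝ), Real.exp (-u) := this
    _ = 1 / t := by rw [integral_exp_neg_Ioi_zero, mul_one, one_div]

-- antiderivative for inner integral
lemma lemAnti (s t : ℝ) :
    HasDerivAt (fun u => -(Real.exp (-(s * u)) * (Real.cos u + s * Real.sin u)) / (1 + s ^ 2))
      (Real.exp (-(s * t)) * Real.sin t) t := by
  have he : HasDerivAt (fun u : ℝ => Real.exp (-(s * u)))
      (Real.exp (-(s * t)) * -s) t := by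
    have : HasDerivAt (fun u : ℝ => -(s * u)) (-s) t := by
      exact (((hasDerivAt_id t).const_mul s).neg).congr_deriv (by ring)
    exact this.exp
  have hg : HasDerivAt (fun u : ℝ => Real.cos u + s * Real.sin u)
      (-Real.sin t + s * Real.cos t) t :=
    (Real.hasDerivAt_cos t).add ((Real.hasDerivAt_sin t).const_mul s)
  have := ((he.mul hg).neg).div_const (1 + s ^ 2)
  have hs : 1 + s ^ 2 ≠ 0 := by positivity
  refine this.congr_deriv ?_
  rw [div_eq_iff hs]
  ring

-- inner integral value
lemma lemInner {R : ℝ} (hR : 0 < R) (s : ℝ) :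
    (∫ t in Ioc (0:ℝ) R, Real.exp (-(s * t)) * Real.sin t)
      = (1 - Real.exp (-(s * R)) * (Real.cos R + s * Real.sin R)) / (1 + s ^ 2) := by
  rw [← intervalIntegral.integral_of_le hR.le]
  rw [intervalIntegral.integral_eq_sub_of_hasDerivAt (fun t _ => lemAnti s t)]
  · simp [Real.cos_zero, Real.sin_zero]
    ring
  · apply Continuous.intervalIntegrable
    continuity

lemma habs_sin {t : ℝ} (ht : 0 ≤ t) : |Real.sin t| ≤ t := by
  rcases le_or_gt t 1 with h | h
  · rw [abs_of_nonneg (Real.sin_nonneg_of_nonneg_of_le_pi ht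
      (h.trans (by linarith [Real.pi_gt_three])))]
    exact Real.sin_le ht
  · exact (Real.abs_sin_le_one t).trans h.le

lemma lemG {R : ℝ} (hR : 0 < R) :
    (∫ t in Ioc (0:ℝ) R, Real.sin t / t)
      = π / 2 - ∫ s in Ioi (0:ℝ),
          Real.exp (-(s * R)) * (Real.cos R + s * Real.sin R) / (1 + s ^ 2) := by
  set μ := volume.restrict (Ioc (0:ℝ) R)
  set ν := volume.restrict (Ioi (0:ℝ))
  set f : ℝ → ℝ → ℝ := fun t s => Real.exp (-(s * t)) * Real.sin t with hf
  have hcont : Continuous (Function.uncurry f) := by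
    apply Continuous.mul
    · exact (continuous_snd.mul continuous_fst).neg.rexp
    · exact Real.continuous_sin.comp continuous_fst
  have hmeas : AEStronglyMeasurable (Function.uncurry f) (μ.prod ν) :=
    hcont.aestronglyMeasurable
  have hint1 : ∀ᵐ t ∂μ, Integrable (fun s => f t s) ν := by
    filter_upwards [ae_restrict_mem measurableSet_Ioc] with t ht
    have h1 : IntegrableOn (fun s => Real.exp (-t * s)) (Ioi (0:ℝ)) :=
      exp_neg_integrableOn_Ioi 0 ht.1
    have : IntegrableOn (fun s => Real.exp (-t * s) * Real.sin t) (Ioi (0:ℝ)) :=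
      h1.mul_const _
    apply this.congr_fun _ measurableSet_Ioi
    intro s _
    simp only [hf]
    ring_nf
  have hnorm : (fun t => ∫ s, ‖f t s‖ ∂ν) =ᵐ[μ] fun t => |Real.sin t| / t := by
    filter_upwards [ae_restrict_mem measurableSet_Ioc] with t ht
    have : ∀ s : ℝ, ‖f t s‖ = Real.exp (-(s * t)) * |Real.sin t| := by
      intro s
      rw [hf]
      simp [abs_mul, abs_of_pos (Real.exp_pos _)]
    simp only [this]
    rw [MeasureTheory.integral_mul_const, hexp ht.1]
    ring
  have hint2 : Integrable (fun t => ∫ s, ‖f t s‖ ∂ν) μ := by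
    apply Integrable.congr _ hnorm.symm
    apply Integrable.mono' (g := fun _ => (1:ℝ))
    · exact integrableOn_const measure_Ioc_lt_top.ne
    · exact (Real.measurable_sin.abs.div measurable_id).aestronglyMeasurable
    · filter_upwards [ae_restrict_mem measurableSet_Ioc] with t ht
      rw [Real.norm_eq_abs, abs_of_nonneg (div_nonneg (abs_nonneg _) ht.1.le)]
      rw [div_le_one ht.1]
      exact habs_sin ht.1.le
  have hprod : Integrable (Function.uncurry f) (μ.prod ν) :=
    (integrable_prod_iff hmeas).mpr ⟨hint1, hint2⟩
  have hswap := MeasureTheory.integral_integral_swap hprod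
  have hLHS : (∫ t, (∫ s, f t s ∂ν) ∂μ) = ∫ t in Ioc (0:ℝ) R, Real.sin t / t := by
    apply MeasureTheory.integral_congr_ae
    filter_upwards [ae_restrict_mem measurableSet_Ioc] with t ht
    rw [hf]
    simp only
    rw [MeasureTheory.integral_mul_const, hexp ht.1]
    ring
  have hRHS : (∫ s, (∫ t, f t s ∂μ) ∂ν)
      = ∫ s in Ioi (0:ℝ),
          (1 - Real.exp (-(s * R)) * (Real.cos R + s * Real.sin R)) / (1 + s ^ 2) := by
    apply MeasureTheory.integral_congr_ae
    filter_upwards with s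
    exact lemInner hR s
  rw [← hLHS, hswap, hRHS]
  have h1 : IntegrableOn (fun s : ℝ => (1 + s ^ 2)⁻¹) (Ioi (0:ℝ)) :=
    integrable_inv_one_add_sq.integrableOn
  have h2 : IntegrableOn
      (fun s => Real.exp (-(s * R)) * (Real.cos R + s * Real.sin R) / (1 + s ^ 2))
      (Ioi (0:ℝ)) := by
    apply Integrable.mono' ((exp_neg_integrableOn_Ioi 0 hR).const_mul 2)
    · exact (Continuous.div (by continuity) (by continuity)
        (fun s => by positivity)).aestronglyMeasurable
    · filter_upwards [ae_restrict_mem measurableSet_Ioi] with s hs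
      have hs0 : (0:ℝ) < s := hs
      rw [Real.norm_eq_abs, abs_div, abs_mul, abs_of_pos (Real.exp_pos _),
        abs_of_pos (by positivity : (0:ℝ) < 1 + s ^ 2)]
      have hb : |Real.cos R + s * Real.sin R| ≤ 1 + s := by
        calc |Real.cos R + s * Real.sin R| ≤ |Real.cos R| + |s * Real.sin R| := abs_add_le _ _
          _ ≤ 1 + s := by
            rw [abs_mul, abs_of_pos hs0]
            have := Real.abs_sin_le_one R
            have := Real.abs_cos_le_one R
            nlinarith
      have hRs : -(s * R) = -R * s := by ring
      rw [hRs]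
      rw [div_le_iff₀ (by positivity : (0:ℝ) < 1 + s ^ 2)]
      have hexp_pos := Real.exp_pos (-R * s)
      nlinarith [sq_nonneg (s - 1)]
  have hsplit : (∫ s in Ioi (0:ℝ),
      (1 - Real.exp (-(s * R)) * (Real.cos R + s * Real.sin R)) / (1 + s ^ 2))
      = (∫ s in Ioi (0:ℝ), (1 + s ^ 2)⁻¹)
        - ∫ s in Ioi (0:ℝ),
            Real.exp (-(s * R)) * (Real.cos R + s * Real.sin R) / (1 + s ^ 2) := by
    rw [← MeasureTheory.integral_sub h1 h2]
    congr 1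
    funext s
    rw [sub_div, one_div]
  rw [hsplit, integral_Ioi_inv_one_add_sq, Real.arctan_zero, sub_zero]

lemma lemH {R : ℝ} (hR : 0 < R) :
    |∫ s in Ioi (0:ℝ),
        Real.exp (-(s * R)) * (Real.cos R + s * Real.sin R) / (1 + s ^ 2)| ≤ 2 / R := by
  have hg : IntegrableOn (fun s : ℝ => 2 * Real.exp (-R * s)) (Ioi (0:ℝ)) :=
    (exp_neg_integrableOn_Ioi 0 hR).const_mul 2
  have hb : ∀ᵐ s ∂(volume.restrict (Ioi (0:ℝ))),
      ‖Real.exp (-(s * R)) * (Real.cos R + s * Real.sin R) / (1 + s ^ 2)‖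
        ≤ 2 * Real.exp (-R * s) := by
    filter_upwards [ae_restrict_mem measurableSet_Ioi] with s hs
    have hs0 : (0:ℝ) < s := hs
    rw [Real.norm_eq_abs, abs_div, abs_mul, abs_of_pos (Real.exp_pos _),
      abs_of_pos (by positivity : (0:ℝ) < 1 + s ^ 2)]
    have hb : |Real.cos R + s * Real.sin R| ≤ 1 + s := by
      calc |Real.cos R + s * Real.sin R| ≤ |Real.cos R| + |s * Real.sin R| := abs_add_le _ _
        _ ≤ 1 + s := by
          rw [abs_mul, abs_of_pos hs0]
          have := Real.abs_sin_le_one R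
          have := Real.abs_cos_le_one R
          nlinarith
    have hRs : -(s * R) = -R * s := by ring
    rw [hRs, div_le_iff₀ (by positivity : (0:ℝ) < 1 + s ^ 2)]
    have hexp_pos := Real.exp_pos (-R * s)
    nlinarith [sq_nonneg (s - 1)]
  have := MeasureTheory.norm_integral_le_of_norm_le hg hb
  rw [Real.norm_eq_abs] at this
  refine this.trans ?_
  have heq : (∫ s in Ioi (0:ℝ), 2 * Real.exp (-R * s)) = 2 * (1 / R) := by
    rw [MeasureTheory.integral_const_mul]
    have : (∫ s in Ioi (0:ℝ), Real.exp (-R * s)) = ∫ s in Ioi (0:ℝ), Real.exp (-(s * R)) := by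
      congr 1; funext s; ring_nf
    rw [this, hexp hR]
  rw [heq]
  rw [mul_one_div]

theorem strange_integral_sin_z_over_z_real_part :
    Tendsto (fun R : ℝ =>
      ∫ θ in (0:ℝ)..π, Real.cos (R * Real.cos θ) * Real.sinh (R * Real.sin θ))
      atTop (nhds π) := by
  have key : ∀ R : ℝ, 0 < R →
      myF R = π - 2 * ∫ s in Ioi (0:ℝ),
        Real.exp (-(s * R)) * (Real.cos R + s * Real.sin R) / (1 + s ^ 2) := by
    intro R hR
    have h1 : myF R = ∫ t in Ioc (0:ℝ) R, myD t := by
      rw [lemF R, intervalIntegral.integral_of_le hR.le]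
    have h2 : (∫ t in Ioc (0:ℝ) R, myD t) = ∫ t in Ioc (0:ℝ) R, 2 * (Real.sin t / t) := by
      apply MeasureTheory.setIntegral_congr_fun measurableSet_Ioc
      intro t ht
      simp only [myD, if_neg (ne_of_gt ht.1)]
      ring
    rw [h1, h2, MeasureTheory.integral_const_mul, lemG hR]
    ring
  have hev : ∀ᶠ R in atTop, ‖myF R - π‖ ≤ 4 / R := by
    filter_upwards [eventually_gt_atTop (0:ℝ)] with R hR
    rw [key R hR]
    have := lemH hR
    rw [Real.norm_eq_abs]
    have heq : π - 2 * (∫ s in Ioi (0:ℝ),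
        Real.exp (-(s * R)) * (Real.cos R + s * Real.sin R) / (1 + s ^ 2)) - π
        = -2 * ∫ s in Ioi (0:ℝ),
            Real.exp (-(s * R)) * (Real.cos R + s * Real.sin R) / (1 + s ^ 2) := by ring
    rw [heq, abs_mul]
    rw [show |(-2:ℝ)| = 2 by norm_num]
    calc 2 * |∫ s in Ioi (0:ℝ),
          Real.exp (-(s * R)) * (Real.cos R + s * Real.sin R) / (1 + s ^ 2)|
        ≤ 2 * (2 / R) := by linarith
      _ = 4 / R := by ring
  have hlim : Tendsto (fun R : ℝ => (4:ℝ) / R) atTop (nhds 0) :=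
    Tendsto.div_atTop tendsto_const_nhds tendsto_id
  have : Tendsto (fun R => myF R - π) atTop (nhds 0) :=
    squeeze_zero_norm' hev hlim
  have hfinal : Tendsto myF atTop (nhds π) := by
    rwa [← tendsto_sub_nhds_zero_iff]
  exact hfinal
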